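/- There exists a positive bounded linear operator T on ℓ∞ with ‖T‖ ≤ 1 such that T is mean ergodic, but for every integer j ≥ 1 the power T^{2j} is not mean ergodic; in particular, T is not weakly almost periodic. -/

import Mathlib

open Filter BoundedContinuousFunction

noncomputable section

namespace MEAux

/-- the partner index: `2i ↔ 2i+1`. -/
def pa (n : ℕ) : ℕ := if n % 2 = 0 then n + 1 else n - 1

lemma pa_pa (n : ℕ) : pa (pa n) = n := by
  unfold pa; split <;> split <;> omega

lemma pa_div (n : ℕ) : pa n / 2 = n / 2 := by
  unfold pa; split <;> omega

def del (i : ℕ) : ℝ := ((i : ℝ) + 2)⁻¹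

lemma del_pos (i : ℕ) : 0 < del i := by
  unfold del; positivity

lemma two_del_le_one (i : ℕ) : 2 * del i ≤ 1 := by
  unfold del
  exact mul_inv_le_one_of_le₀ (by push_cast; linarith [Nat.cast_nonneg (α := ℝ) i]) (by positivity)

def bet (i : ℕ) : ℝ := 2 * del i - 1

lemma bet_nonpos (i : ℕ) : bet i ≤ 0 := by
  have := two_del_le_one i; unfold bet; linarith

lemma neg_one_lt_bet (i : ℕ) : -1 < bet i := by
  have := del_pos i; unfold bet; linarith

lemma abs_bet_lt_one (i : ℕ) : |bet i| < 1 := by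
  rw [abs_lt]; exact ⟨neg_one_lt_bet i, lt_of_le_of_lt (bet_nonpos i) one_pos⟩

def sval (z : ℕ →ᵇ ℝ) (n : ℕ) : ℝ := (z n + z (pa n)) / 2
def dval (z : ℕ →ᵇ ℝ) (n : ℕ) : ℝ := (z n - z (pa n)) / 2

lemma abs_dval_le (z : ℕ →ᵇ ℝ) (n : ℕ) : |dval z n| ≤ ‖z‖ := by
  have h1 : |z n| ≤ ‖z‖ := z.norm_coe_le_norm n
  have h2 : |z (pa n)| ≤ ‖z‖ := z.norm_coe_le_norm (pa n)
  unfold dval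
  rw [abs_le] at h1 h2 ⊢
  constructor <;> linarith [h1.1, h1.2, h2.1, h2.2]

def Tf (z : ℕ →ᵇ ℝ) : ℕ →ᵇ ℝ :=
  ofNormedAddCommGroup
    (fun n => del (n / 2) * z n + (1 - del (n / 2)) * z (pa n))
    continuous_of_discreteTopology ‖z‖ (by
      intro n
      have hd0 : 0 < del (n / 2) := del_pos _
      have hd1 : del (n / 2) ≤ 1 := by have := two_del_le_one (n / 2); linarith
      have h1 : |z n| ≤ ‖z‖ := z.norm_coe_le_norm n
      have h2 : |z (pa n)| ≤ ‖z‖ := z.norm_coe_le_norm (pa n)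
      rw [Real.norm_eq_abs]
      rw [abs_le] at h1 h2 ⊢
      constructor <;> nlinarith [h1.1, h1.2, h2.1, h2.2])

lemma Tf_apply (z : ℕ →ᵇ ℝ) (n : ℕ) :
    Tf z n = del (n / 2) * z n + (1 - del (n / 2)) * z (pa n) := rfl

def Tlin : (ℕ →ᵇ ℝ) →ₗ[ℝ] (ℕ →ᵇ ℝ) where
  toFun := Tf
  map_add' z w := by
    ext n; simp [Tf_apply]; ring
  map_smul' c z := by
    ext n; simp [Tf_apply]; ring

def T : (ℕ →ᵇ ℝ) →L[ℝ] (ℕ →ᵇ ℝ) :=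
  LinearMap.mkContinuous Tlin 1 (fun z => by
    have : ‖Tf z‖ ≤ ‖z‖ :=
      norm_ofNormedAddCommGroup_le continuous_of_discreteTopology (norm_nonneg z) _
    simpa [Tlin] using this)

lemma T_apply (z : ℕ →ᵇ ℝ) (n : ℕ) :
    T z n = del (n / 2) * z n + (1 - del (n / 2)) * z (pa n) := rfl

lemma T_norm_le : ‖T‖ ≤ 1 :=
  LinearMap.mkContinuous_norm_le _ zero_le_one _

lemma T_pos (x : ℕ →ᵇ ℝ) (hx : (0 : ℕ →ᵇ ℝ) ≤ x) : (0 : ℕ →ᵇ ℝ) ≤ T x := by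
  have hx' : ∀ n, 0 ≤ x n := fun n => hx n
  intro n
  show (0 : ℕ →ᵇ ℝ) n ≤ T x n
  rw [T_apply]
  have hd0 : 0 < del (n / 2) := del_pos _
  have hd1 : del (n / 2) ≤ 1 := by have := two_del_le_one (n / 2); linarith
  have := hx' n; have := hx' (pa n)
  simp only [coe_zero, Pi.zero_apply]
  nlinarith [mul_nonneg hd0.le (hx' n), mul_nonneg (by linarith : (0:ℝ) ≤ 1 - del (n/2)) (hx' (pa n))]

lemma sval_T (z : ℕ →ᵇ ℝ) (n : ℕ) : sval (T z) n = sval z n := by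
  unfold sval
  rw [T_apply, T_apply, pa_pa, pa_div]
  ring

lemma dval_T (z : ℕ →ᵇ ℝ) (n : ℕ) : dval (T z) n = bet (n / 2) * dval z n := by
  unfold dval bet
  rw [T_apply, T_apply, pa_pa, pa_div]
  ring

lemma T_pow_apply (k : ℕ) (z : ℕ →ᵇ ℝ) (n : ℕ) :
    (T ^ k) z n = sval z n + bet (n / 2) ^ k * dval z n := by
  induction k generalizing z with
  | zero =>
    simp only [pow_zero, ContinuousLinearMap.one_apply]
    unfold sval dval; ring
  | succ k ih =>
    rw [pow_succ, ContinuousLinearMap.mul_apply, ih (T z), sval_T, dval_T]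
    ring

lemma cesaro_apply (z : ℕ →ᵇ ℝ) (n m : ℕ) :
    (∑ k ∈ Finset.range n, (T ^ k) z) m
      = n * sval z m + (∑ k ∈ Finset.range n, bet (m / 2) ^ k) * dval z m := by
  rw [BoundedContinuousFunction.coe_sum, Finset.sum_apply]
  simp only [T_pow_apply]
  rw [Finset.sum_add_distrib, Finset.sum_const, Finset.card_range, ← Finset.sum_mul]
  simp

lemma abs_geom_le (i n : ℕ) : |∑ k ∈ Finset.range n, bet i ^ k| ≤ 2 := by
  have hne : bet i ≠ 1 := by have := bet_nonpos i; intro h; rw [h] at this; linarith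
  rw [geom_sum_eq hne, abs_div]
  have h1 : |bet i ^ n - 1| ≤ 2 := by
    have : |bet i ^ n| ≤ 1 := by
      rw [abs_pow]; exact pow_le_one₀ (abs_nonneg _) (abs_bet_lt_one i).le
    rw [abs_le] at this ⊢; constructor <;> linarith [this.1, this.2]
  have h2 : (1 : ℝ) ≤ |bet i - 1| := by
    have := bet_nonpos i
    rw [abs_sub_comm, abs_of_nonneg (by linarith)]
    linarith
  calc |bet i ^ n - 1| / |bet i - 1| ≤ |bet i ^ n - 1| / 1 :=
        div_le_div_of_nonneg_left (abs_nonneg _) one_pos h2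
    _ ≤ 2 := by rwa [div_one]

/-- the limit of the Cesàro means of `T` applied to `z` -/
def Sf (z : ℕ →ᵇ ℝ) : ℕ →ᵇ ℝ :=
  ofNormedAddCommGroup (fun n => sval z n) continuous_of_discreteTopology ‖z‖ (by
    intro n
    have h1 : |z n| ≤ ‖z‖ := z.norm_coe_le_norm n
    have h2 : |z (pa n)| ≤ ‖z‖ := z.norm_coe_le_norm (pa n)
    rw [Real.norm_eq_abs]
    unfold sval
    rw [abs_le] at h1 h2 ⊢
    constructor <;> [nlinarith [h1.1, h2.1]; nlinarith [h1.2, h2.2]])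

lemma mean_ergodic (x : ℕ →ᵇ ℝ) :
    Tendsto (fun n : ℕ => (n : ℝ)⁻¹ • ∑ k ∈ Finset.range n, (T ^ k) x) atTop
      (nhds (Sf x)) := by
  rw [tendsto_iff_norm_sub_tendsto_zero]
  apply squeeze_zero' (Eventually.of_forall fun n => norm_nonneg _)
    (g := fun n : ℕ => 2 * ‖x‖ * (n : ℝ)⁻¹)
  · filter_upwards [eventually_ge_atTop 1] with n hn
    have hn1 : (1 : ℝ) ≤ (n : ℝ) := by exact_mod_cast hn
    have hn0 : (n : ℝ) ≠ 0 := by linarith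
    have hb : 0 ≤ 2 * ‖x‖ * (n : ℝ)⁻¹ := by positivity
    rw [BoundedContinuousFunction.norm_le hb]
    intro m
    have : ((n : ℝ)⁻¹ • ∑ k ∈ Finset.range n, (T ^ k) x - Sf x) m
        = (n : ℝ)⁻¹ * (∑ k ∈ Finset.range n, bet (m / 2) ^ k) * dval x m := by
      simp only [coe_sub, Pi.sub_apply, coe_smul, Pi.smul_apply, smul_eq_mul]
      rw [cesaro_apply]
      have : Sf x m = sval x m := rfl
      rw [this]
      field_simp
      ring
    rw [this, Real.norm_eq_abs, abs_mul, abs_mul, abs_inv, Nat.abs_cast]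
    calc (n : ℝ)⁻¹ * |∑ k ∈ Finset.range n, bet (m / 2) ^ k| * |dval x m|
        ≤ (n : ℝ)⁻¹ * 2 * ‖x‖ := by
          apply mul_le_mul
          · exact mul_le_mul_of_nonneg_left (abs_geom_le _ _) (by positivity)
          · exact abs_dval_le x m
          · exact abs_nonneg _
          · positivity
      _ = 2 * ‖x‖ * (n : ℝ)⁻¹ := by ring
  · have := tendsto_inv_atTop_nhds_zero_nat.const_mul (2 * ‖x‖)
    simpa using this

end MEAux

end

noncomputable section Part2
namespace MEAux

/-- the alternating witness -/
def xw : ℕ →ᵇ ℝ :=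
  ofNormedAddCommGroup (fun n => if n % 2 = 0 then 1 else -1)
    continuous_of_discreteTopology 1 (by
      intro n; dsimp; split <;> simp)

lemma xw_apply (n : ℕ) : xw n = if n % 2 = 0 then 1 else -1 := rfl

lemma sval_xw (m : ℕ) : sval xw m = 0 := by
  unfold sval pa
  rcases Nat.even_or_odd m with h | h
  · have h0 : m % 2 = 0 := Nat.even_iff.mp h
    rw [xw_apply, xw_apply]
    simp only [h0, if_true]
    have : (m + 1) % 2 = 1 := by omega
    simp [this]
  · have h0 : m % 2 = 1 := Nat.odd_iff.mp h
    rw [xw_apply, xw_apply]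
    simp only [h0]
    have : (m - 1) % 2 = 0 := by omega
    simp [this]

lemma dval_xw_even (m : ℕ) (h : m % 2 = 0) : dval xw m = 1 := by
  unfold dval pa
  rw [xw_apply, xw_apply]
  simp only [h, if_true]
  have : (m + 1) % 2 = 1 := by omega
  norm_num [this]

/-- `B i = -bet i = 1 - 2 del i ∈ [0,1)` -/
def B (i : ℕ) : ℝ := 1 - 2 * del i

lemma bet_eq_neg_B (i : ℕ) : bet i = -(B i) := by unfold bet B; ring

lemma B_nonneg (i : ℕ) : 0 ≤ B i := by have := two_del_le_one i; unfold B; linarith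

lemma B_lt_one (i : ℕ) : B i < 1 := by have := del_pos i; unfold B; linarith

lemma Tpow_xw_even (N i : ℕ) : (T ^ N) xw (2 * i) = (-(B i)) ^ N := by
  rw [T_pow_apply]
  have h2 : (2 * i) % 2 = 0 := by omega
  have h3 : (2 * i) / 2 = i := by omega
  rw [h3, sval_xw, dval_xw_even _ h2, bet_eq_neg_B]
  ring

lemma not_mean_ergodic_even_pow (j : ℕ) (hj : 1 ≤ j) :
    ¬ ∃ y : ℕ →ᵇ ℝ,
      Tendsto (fun n : ℕ => (n : ℝ)⁻¹ • ∑ k ∈ Finset.range n, ((T ^ (2 * j)) ^ k) xw)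
        atTop (nhds y) := by
  rintro ⟨y, hy⟩
  set A : ℕ → (ℕ →ᵇ ℝ) :=
    fun n => (n : ℝ)⁻¹ • ∑ k ∈ Finset.range n, ((T ^ (2 * j)) ^ k) xw with hA
  have hval : ∀ n i : ℕ, A n (2 * i)
      = (n : ℝ)⁻¹ * ∑ k ∈ Finset.range n, (B i ^ (2 * j)) ^ k := by
    intro n i
    rw [hA]
    simp only [coe_smul, Pi.smul_apply, smul_eq_mul, BoundedContinuousFunction.coe_sum,
      Finset.sum_apply]
    congr 1
    refine Finset.sum_congr rfl fun k _ => ?_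
    rw [← pow_mul, Tpow_xw_even, ← pow_mul]
    rw [Even.neg_pow (by exact (even_two_mul j).mul_right k)]
  -- each coordinate of the limit is 0
  have hcoord : ∀ i : ℕ, y (2 * i) = 0 := by
    intro i
    have h1 : Tendsto (fun n => A n (2 * i)) atTop (nhds (y (2 * i))) :=
      ((continuous_eval_const (2 * i)).tendsto y).comp hy
    have hrlt : B i ^ (2 * j) < 1 :=
      pow_lt_one₀ (B_nonneg i) (B_lt_one i) (by omega)
    have hrnn : (0:ℝ) ≤ B i ^ (2 * j) := pow_nonneg (B_nonneg i) _
    have h2 : Tendsto (fun n => A n (2 * i)) atTop (nhds 0) := by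
      have hb : ∀ n : ℕ, |A n (2 * i)| ≤ (1 - B i ^ (2 * j))⁻¹ * (n : ℝ)⁻¹ := by
        intro n
        rw [hval]
        have hsum : ∑ k ∈ Finset.range n, (B i ^ (2 * j)) ^ k ≤ (1 - B i ^ (2 * j))⁻¹ := by
          set r := B i ^ (2 * j) with hr
          have h1r : (0:ℝ) < 1 - r := by linarith
          have heq : (r ^ n - 1) / (r - 1) = (1 - r ^ n) / (1 - r) := by
            rw [div_eq_div_iff (by linarith) (by linarith)]; ring
          rw [geom_sum_eq (by linarith : r ≠ 1), heq]
          have hrn : 0 ≤ r ^ n := pow_nonneg hrnn n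
          calc (1 - r ^ n) / (1 - r) ≤ 1 / (1 - r) := by gcongr; linarith
            _ = (1 - r)⁻¹ := one_div _
        have hsum0 : 0 ≤ ∑ k ∈ Finset.range n, (B i ^ (2 * j)) ^ k :=
          Finset.sum_nonneg fun k _ => pow_nonneg hrnn k
        rw [abs_mul, abs_inv, Nat.abs_cast, abs_of_nonneg hsum0]
        rw [mul_comm ((1 - B i ^ (2*j))⁻¹) _]
        exact mul_le_mul_of_nonneg_left hsum (by positivity)
      apply squeeze_zero_norm hb
      simpa using tendsto_inv_atTop_nhds_zero_nat.const_mul ((1 - B i ^ (2 * j))⁻¹)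
    exact tendsto_nhds_unique h1 h2
  -- contradiction at a far coordinate
  rw [Metric.tendsto_atTop] at hy
  obtain ⟨N, hN⟩ := hy (1/2) (by norm_num)
  set n := max N 1 with hn
  have hdist : dist (A n) y < 1/2 := hN n (le_max_left _ _)
  have hn1 : 1 ≤ n := le_max_right _ _
  set i := 8 * j * n with hi
  -- lower bound for A n (2 i)
  have hlow : 1/2 < A n (2 * i) := by
    rw [hval]
    have hterm : ∀ k ∈ Finset.range n, (1:ℝ)/2 < (B i ^ (2 * j)) ^ k := by
      intro k hk
      rw [Finset.mem_range] at hk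
      rw [← pow_mul]
      have hmono : B i ^ (2 * j * n) ≤ B i ^ (2 * j * k) :=
        pow_le_pow_of_le_one (B_nonneg i) (B_lt_one i).le (by nlinarith)
      refine lt_of_lt_of_le ?_ hmono
      have hber : 1 + ((2 * j * n : ℕ) : ℝ) * (B i - 1) ≤ B i ^ (2 * j * n) := by
        have := one_add_mul_le_pow (a := B i - 1) (by have := B_nonneg i; linarith) (2 * j * n)
        simpa using this
      have hBi : B i - 1 = -(2 * del i) := by unfold B; ring
      have hdel : del i = (((8 * j * n : ℕ) : ℝ) + 2)⁻¹ := by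
        unfold del; rw [hi]
      set c : ℝ := ((8 * j * n : ℕ) : ℝ) + 2 with hc
      have hcpos : (0:ℝ) < c := by rw [hc]; positivity
      have hkey : (1:ℝ)/2 < 1 + ((2 * j * n : ℕ) : ℝ) * (B i - 1) := by
        rw [hBi, hdel]
        have h8 : ((2 * j * n : ℕ) : ℝ) * (2 * c⁻¹) < 1/2 := by
          have : ((2 * j * n : ℕ) : ℝ) * (2 * c⁻¹) = (4 * (j:ℝ) * n) * c⁻¹ := by
            push_cast; ring
          rw [this, mul_inv_lt_iff₀ hcpos, hc]
          push_cast
          nlinarith [(by exact_mod_cast hj : (1:ℝ) ≤ (j:ℝ)),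
            (by exact_mod_cast hn1 : (1:ℝ) ≤ (n:ℝ))]
        linarith
      linarith
    have hsum : (n : ℝ) * (1/2) < ∑ k ∈ Finset.range n, (B i ^ (2 * j)) ^ k := by
      have hne : (Finset.range n).Nonempty := Finset.nonempty_range_iff.mpr (by omega)
      have := Finset.sum_lt_sum_of_nonempty hne hterm
      simpa [Finset.sum_const, Finset.card_range, mul_comm] using this
    have hnpos : (0:ℝ) < n := by exact_mod_cast hn1
    rw [lt_inv_mul_iff₀ hnpos]
    exact hsum
  have : (1:ℝ)/2 < 1/2 := by
    have hle : |A n (2 * i) - y (2 * i)| ≤ dist (A n) y := by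
      rw [← Real.dist_eq]
      exact dist_coe_le_dist _
    rw [hcoord i] at hle
    rw [sub_zero] at hle
    have : A n (2 * i) ≤ |A n (2 * i)| := le_abs_self _
    linarith
  norm_num at this

end MEAux
end Part2

noncomputable section Part3
namespace MEAux

/-- an ultrafilter extending `atTop` on `ℕ` -/
def U : Ultrafilter ℕ := (Ultrafilter.exists_le (atTop : Filter ℕ)).choose

lemma U_le : (U : Filter ℕ) ≤ atTop :=
  (Ultrafilter.exists_le (atTop : Filter ℕ)).choose_spec

/-- limit along `U` (of a bounded sequence) -/
def ulim (u : ℕ → ℝ) : ℝ := limUnder (U : Filter ℕ) u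

lemma tendsto_ulim {u : ℕ → ℝ} (h : ∃ a, Tendsto u (U : Filter ℕ) (nhds a)) :
    Tendsto u (U : Filter ℕ) (nhds (ulim u)) :=
  tendsto_nhds_limUnder h

lemma exists_tendsto_of_bdd {u : ℕ → ℝ} {C : ℝ} (hC : ∀ i, |u i| ≤ C) :
    ∃ a, Tendsto u (U : Filter ℕ) (nhds a) := by
  have hsub : (U.map u : Filter ℝ) ≤ Filter.principal (Set.Icc (-C) C) := by
    rw [Ultrafilter.coe_map, le_principal_iff, mem_map]
    have : ∀ i, u i ∈ Set.Icc (-C) C := fun i => abs_le.mp (hC i) |> fun h => ⟨h.1, h.2⟩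
    exact univ_mem' this
  obtain ⟨a, -, ha⟩ := (isCompact_Icc (a := -C) (b := C)).ultrafilter_le_nhds (U.map u) hsub
  rw [Ultrafilter.coe_map] at ha
  exact ⟨a, ha⟩

lemma ulim_eq {u : ℕ → ℝ} {a : ℝ} (h : Tendsto u (U : Filter ℕ) (nhds a)) :
    ulim u = a :=
  tendsto_nhds_unique (tendsto_ulim ⟨a, h⟩) h

lemma bdd_coord (z : ℕ →ᵇ ℝ) : ∀ i, |z (2 * i)| ≤ ‖z‖ := fun i => z.norm_coe_le_norm _

/-- the Banach-limit-like functional `z ↦ lim_U z(2i)` -/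
def phi : (ℕ →ᵇ ℝ) →L[ℝ] ℝ :=
  LinearMap.mkContinuous
    { toFun := fun z => ulim (fun i => z (2 * i))
      map_add' := fun z w => by
        have hz := tendsto_ulim (exists_tendsto_of_bdd (bdd_coord z))
        have hw := tendsto_ulim (exists_tendsto_of_bdd (bdd_coord w))
        have hsum : Tendsto (fun i => (z + w) (2 * i)) (U : Filter ℕ)
            (nhds (ulim (fun i => z (2 * i)) + ulim (fun i => w (2 * i)))) := by
          simpa using hz.add hw
        exact ulim_eq hsum
      map_smul' := fun c z => by
        have hz := tendsto_ulim (exists_tendsto_of_bdd (bdd_coord z))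
        have hs : Tendsto (fun i => (c • z) (2 * i)) (U : Filter ℕ)
            (nhds (c * ulim (fun i => z (2 * i)))) := by
          simpa using hz.const_mul c
        simpa using ulim_eq hs }
    1 (fun z => by
      have hz := tendsto_ulim (exists_tendsto_of_bdd (bdd_coord z))
      have h1 : ulim (fun i => z (2 * i)) ≤ ‖z‖ :=
        le_of_tendsto hz (Eventually.of_forall fun i => (abs_le.mp (bdd_coord z i)).2)
      have h2 : -‖z‖ ≤ ulim (fun i => z (2 * i)) :=
        ge_of_tendsto hz (Eventually.of_forall fun i => (abs_le.mp (bdd_coord z i)).1)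
      rw [one_mul]
      simp only [LinearMap.coe_mk, AddHom.coe_mk, Real.norm_eq_abs]
      rw [abs_le]; exact ⟨h2, h1⟩)

lemma phi_apply (z : ℕ →ᵇ ℝ) : phi z = ulim (fun i => z (2 * i)) := rfl

lemma tendsto_B_pow (N : ℕ) : Tendsto (fun i => B i ^ N) atTop (nhds 1) := by
  have hdel : Tendsto del atTop (nhds 0) := by
    have : Tendsto (fun i : ℕ => (i : ℝ) + 2) atTop atTop :=
      tendsto_atTop_add_const_right _ _ tendsto_natCast_atTop_atTop
    exact this.inv_tendsto_atTop
  have hB : Tendsto B atTop (nhds 1) := by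
    have := hdel.const_mul 2
    have h2 := (tendsto_const_nhds (x := (1:ℝ)) (f := atTop)).sub this
    exact (by simpa using h2 : Tendsto (fun x => 1 - 2 * del x) atTop (nhds 1))
  simpa using hB.pow N

lemma phi_orbit (N : ℕ) : phi ((T ^ N) xw) = (-1 : ℝ) ^ N := by
  rw [phi_apply]
  apply ulim_eq
  have h1 : Tendsto (fun i => (T ^ N) xw (2 * i)) atTop (nhds ((-1 : ℝ) ^ N)) := by
    have : ∀ i, (T ^ N) xw (2 * i) = (-1 : ℝ) ^ N * B i ^ N := by
      intro i; rw [Tpow_xw_even, neg_pow]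
    simp only [this]
    simpa using (tendsto_B_pow N).const_mul ((-1 : ℝ) ^ N)
  exact h1.mono_left U_le

lemma not_weakly_compact_orbit :
    ¬ IsCompact (closure
      (Set.range fun n : ℕ => toWeakSpace ℝ (ℕ →ᵇ ℝ) ((T ^ n) xw))) := by
  intro hK
  set g : ℕ → WeakSpace ℝ (ℕ →ᵇ ℝ) := fun n => toWeakSpace ℝ (ℕ →ᵇ ℝ) ((T ^ n) xw) with hg
  have hle : Filter.map g atTop ≤ Filter.principal (closure (Set.range g)) := by
    rw [le_principal_iff, mem_map]
    exact univ_mem' fun n => subset_closure ⟨n, rfl⟩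
  obtain ⟨y, -, hy⟩ := hK hle
  -- continuous linear functionals are weakly continuous
  have hweak : ∀ ψ : (ℕ →ᵇ ℝ) →L[ℝ] ℝ,
      Continuous fun v : WeakSpace ℝ (ℕ →ᵇ ℝ) => ψ ((toWeakSpace ℝ (ℕ →ᵇ ℝ)).symm v) :=
    fun ψ => WeakBilin.eval_continuous ((topDualPairing ℝ (ℕ →ᵇ ℝ)).flip) ψ
  -- cluster point transferred through a weakly continuous functional
  have hclust : ∀ ψ : (ℕ →ᵇ ℝ) →L[ℝ] ℝ,
      ClusterPt (ψ ((toWeakSpace ℝ (ℕ →ᵇ ℝ)).symm y))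
        (Filter.map (fun n => ψ ((T ^ n) xw)) atTop) := by
    intro ψ
    have := hy.map ((hweak ψ).continuousAt)
      (Filter.tendsto_map (f := fun v : WeakSpace ℝ (ℕ →ᵇ ℝ) =>
        ψ ((toWeakSpace ℝ (ℕ →ᵇ ℝ)).symm v)))
    rw [Filter.map_map] at this
    exact this
  -- all coordinates of y vanish
  set yb : ℕ →ᵇ ℝ := (toWeakSpace ℝ (ℕ →ᵇ ℝ)).symm y with hyb
  have hcoord : ∀ m : ℕ, yb m = 0 := by
    intro m
    have h1 := hclust (evalCLM ℝ m)
    have h2 : Tendsto (fun n => (T ^ n) xw m) atTop (nhds 0) := by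
      have : ∀ n, (T ^ n) xw m = bet (m / 2) ^ n * dval xw m := by
        intro n; rw [T_pow_apply, sval_xw]; ring
      simp only [this]
      simpa using (tendsto_pow_atTop_nhds_zero_of_abs_lt_one (abs_bet_lt_one (m / 2))).mul_const
        (dval xw m)
    have h3 : ClusterPt (yb m) (nhds (0 : ℝ)) := by
      have hE : ∀ n, (evalCLM (𝕜 := ℝ) m) ((T ^ n) xw) = (T ^ n) xw m := fun n => rfl
      refine ClusterPt.mono ?_ h2
      simpa [hE] using h1
    exact eq_of_nhds_neBot h3
  have hyb0 : yb = 0 := by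
    ext m; simpa using hcoord m
  -- but phi gives cluster value 0 for the sequence (-1)^n, contradiction
  have h4 := hclust phi
  rw [hyb0] at h4
  simp only [map_zero] at h4
  simp only [phi_orbit] at h4
  -- 0 is a cluster point of (-1)^n : contradiction
  have h5 : ∃ n : ℕ, |(-1 : ℝ) ^ n| < 1/2 := by
    have hU : Metric.ball (0 : ℝ) (1/2) ∈ nhds (0 : ℝ) :=
      Metric.ball_mem_nhds _ (by norm_num)
    have hV : Set.range (fun n : ℕ => (-1 : ℝ) ^ n)
        ∈ Filter.map (fun n : ℕ => (-1 : ℝ) ^ n) atTop := by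
      rw [mem_map]
      exact univ_mem' fun n => ⟨n, rfl⟩
    obtain ⟨t, ht1, ht2⟩ := clusterPt_iff_nonempty.mp h4 hU hV
    obtain ⟨n, rfl⟩ := ht2
    refine ⟨n, ?_⟩
    simpa [Real.dist_eq] using ht1
  obtain ⟨n, hn⟩ := h5
  rw [abs_pow, abs_neg, abs_one, one_pow] at hn
  norm_num at hn

end MEAux
end Part3

/-- There exists a positive bounded linear operator `T` on
`ℓ∞` (modelled as `ℕ →ᵇ ℝ`) with `‖T‖ ≤ 1` such that `T` is mean ergodic, but for every
`j ≥ 1` the power `T^(2j)` is not mean ergodic; in particular `T` is not weakly almost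
periodic (some orbit is not relatively weakly compact). -/
theorem exists_mean_ergodic_contraction_on_linfty_with_non_ergodic_even_powers :
    ∃ T : (ℕ →ᵇ ℝ) →L[ℝ] (ℕ →ᵇ ℝ),
      ‖T‖ ≤ 1 ∧
      (∀ x : ℕ →ᵇ ℝ, 0 ≤ x → 0 ≤ T x) ∧
      (∀ x : ℕ →ᵇ ℝ, ∃ y : ℕ →ᵇ ℝ,
        Tendsto (fun n : ℕ => (n : ℝ)⁻¹ • ∑ k ∈ Finset.range n, (T ^ k) x) atTop (nhds y)) ∧
      (∀ j : ℕ, 1 ≤ j → ∃ x : ℕ →ᵇ ℝ, ¬ ∃ y : ℕ →ᵇ ℝ,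
        Tendsto (fun n : ℕ => (n : ℝ)⁻¹ • ∑ k ∈ Finset.range n, ((T ^ (2 * j)) ^ k) x)
          atTop (nhds y)) ∧
      (∃ x : ℕ →ᵇ ℝ,
        ¬ IsCompact (closure
          (Set.range fun n : ℕ => toWeakSpace ℝ (ℕ →ᵇ ℝ) ((T ^ n) x)))) := by
  refine ⟨MEAux.T, MEAux.T_norm_le, MEAux.T_pos, fun x => ⟨MEAux.Sf x, MEAux.mean_ergodic x⟩,
    fun j hj => ⟨MEAux.xw, MEAux.not_mean_ergodic_even_pow j hj⟩,
    ⟨MEAux.xw, MEAux.not_weakly_compact_orbit⟩⟩
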